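/- Let n ≥ 45 be an integer. For each integer a with ⌈(n+7)/5⌉ ≤ a ≤ ⌊(n−11)/3⌋ and n − a ≡ 1 (mod 2), set b = (n − 3a − 1)/2. Then for every integer c with b + 2 ≤ c ≤ a − 2, the integer (a choose 2) − c = a(a−1)/2 − c is an eigenvalue of the transposition graph Cay(S_n, T_n). -/

import Mathlib

open Classical in
/-- The adjacency matrix of the transposition graph `Cay(S_n, T_n)`: vertices are the
permutations of `{1, ..., n}` (modelled as `Equiv.Perm (Fin n)`), and distinct `f, g`
are adjacent iff `f * g⁻¹` is a transposition. -/
noncomputable def transpositionGraphAdjMatrix (n : ℕ) :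
    Matrix (Equiv.Perm (Fin n)) (Equiv.Perm (Fin n)) ℝ :=
  fun f g => if f ≠ g ∧ (f * g⁻¹).IsSwap then 1 else 0

/-- An integer `m` is an eigenvalue of the transposition graph `Cay(S_n, T_n)` if it is an
eigenvalue of its adjacency matrix viewed as a matrix over `ℝ`. -/
def IsTranspositionGraphEigenvalue (n : ℕ) (m : ℤ) : Prop :=
  ∃ v : Equiv.Perm (Fin n) → ℝ, v ≠ 0 ∧
    (transpositionGraphAdjMatrix n).mulVec v = (m : ℝ) • v

open Finset Equiv

namespace TG

variable {n : ℕ} (row col : Fin n → ℕ)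

abbrev G (n : ℕ) := Equiv.Perm (Fin n)

instance : DecidablePred (Equiv.Perm.IsSwap : G n → Prop) := fun τ => by
  unfold Equiv.Perm.IsSwap; infer_instance

def Rset : Finset (G n) := univ.filter (fun p => ∀ z, row (p z) = row z)

def Cset : Finset (G n) := univ.filter (fun q => ∀ z, col (q z) = col z)

noncomputable def sgn (q : G n) : ℝ := ((Equiv.Perm.sign q : ℤ) : ℝ)

noncomputable def esym : G n → ℝ :=
  fun g => ∑ p ∈ Rset row, ∑ q ∈ Cset col, if p * q = g then sgn q else 0

def swaps (n : ℕ) : Finset (G n) := univ.filter (fun τ => τ.IsSwap)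

noncomputable def Zop (v : G n → ℝ) : G n → ℝ := fun f => ∑ τ ∈ swaps n, v (τ * f)

lemma mem_Rset {p : G n} : p ∈ Rset row ↔ ∀ z, row (p z) = row z := by
  simp [Rset]

lemma mem_Cset {q : G n} : q ∈ Cset col ↔ ∀ z, col (q z) = col z := by
  simp [Cset]

lemma mem_swaps {τ : G n} : τ ∈ swaps n ↔ τ.IsSwap := by simp [swaps]

lemma one_mem_Rset : (1 : G n) ∈ Rset row := by simp [mem_Rset]

lemma one_mem_Cset : (1 : G n) ∈ Cset col := by simp [mem_Cset]

lemma mul_mem_Rset {p p' : G n} (h : p ∈ Rset row) (h' : p' ∈ Rset row) :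
    p * p' ∈ Rset row := by
  rw [mem_Rset] at *
  intro z; simp [Perm.mul_apply, h, h']

lemma mul_mem_Cset {q q' : G n} (h : q ∈ Cset col) (h' : q' ∈ Cset col) :
    q * q' ∈ Cset col := by
  rw [mem_Cset] at *
  intro z; simp [Perm.mul_apply, h, h']

lemma inv_mem_Rset {p : G n} (h : p ∈ Rset row) : p⁻¹ ∈ Rset row := by
  rw [mem_Rset] at *
  intro z
  conv_rhs => rw [← (show p (p⁻¹ z) = z from p.apply_symm_apply z)]
  rw [h]

lemma inv_mem_Cset {q : G n} (h : q ∈ Cset col) : q⁻¹ ∈ Cset col := by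
  rw [mem_Cset] at *
  intro z
  conv_rhs => rw [← (show q (q⁻¹ z) = z from q.apply_symm_apply z)]
  rw [h]

lemma sgn_mul (q q' : G n) : sgn (q * q') = sgn q * sgn q' := by
  simp [sgn]

lemma sgn_one : sgn (1 : G n) = 1 := by simp [sgn]

lemma sgn_inv (q : G n) : sgn q⁻¹ = sgn q := by
  simp [sgn]

lemma sgn_mul_self (q : G n) : sgn q * sgn q = 1 := by
  simp [sgn, ← Int.cast_mul, Int.units_mul_self]

variable (H1 : ∀ x y, row x = row y → col x = col y → x = y)

section Uniq
include H1

/-- An element that preserves rows and columns is the identity. -/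
lemma rc_eq_one {g : G n} (hr : g ∈ Rset row) (hc : g ∈ Cset col) : g = 1 := by
  rw [mem_Rset] at hr; rw [mem_Cset] at hc
  ext z
  exact congrArg Fin.val (H1 (g z) z (hr z) (hc z))

/-- Uniqueness of the RC factorization. -/
lemma factor_unique {p p' q q' : G n} (hp : p ∈ Rset row) (hp' : p' ∈ Rset row)
    (hq : q ∈ Cset col) (hq' : q' ∈ Cset col) (h : p * q = p' * q') :
    p = p' ∧ q = q' := by
  have key : p'⁻¹ * p = q' * q⁻¹ := by
    have : p'⁻¹ * (p * q) * q⁻¹ = p'⁻¹ * (p' * q') * q⁻¹ := by rw [h]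
    group at this ⊢
    simpa [mul_assoc] using this
  have h1 : p'⁻¹ * p = 1 := by
    apply rc_eq_one row col H1
    · exact mul_mem_Rset row (inv_mem_Rset row hp') hp
    · rw [key]; exact mul_mem_Cset col hq' (inv_mem_Cset col hq)
  have h2 : q' * q⁻¹ = 1 := by rw [← key, h1]
  constructor
  · have := congrArg (fun x => p' * x) h1
    simpa [mul_assoc] using this
  · have h3 : q' = q := by
      have := congrArg (fun x => x * q) h2
      simpa [mul_assoc] using this
    exact h3.symm

lemma esym_eval_fac {p q : G n} (hp : p ∈ Rset row) (hq : q ∈ Cset col) :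
    esym row col (p * q) = sgn q := by
  unfold esym
  rw [Finset.sum_eq_single p]
  · rw [Finset.sum_eq_single q]
    · simp
    · intro q' hq' hne
      rw [if_neg]
      intro h
      exact hne (factor_unique row col H1 hp hp hq' hq h).2
    · intro h; exact absurd hq h
  · intro p' hp' hne
    apply Finset.sum_eq_zero
    intro q' hq'
    rw [if_neg]
    intro h
    exact hne (factor_unique row col H1 hp' hp hq' hq h).1
  · intro h; exact absurd hp h

lemma esym_one : esym row col (1 : G n) = 1 := by
  have := esym_eval_fac row col H1 (one_mem_Rset row) (one_mem_Cset col)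
  simpa [sgn_one] using this

end Uniq

lemma esym_eval_nonfac {g : G n} (h : ¬ ∃ p ∈ Rset row, ∃ q ∈ Cset col, p * q = g) :
    esym row col g = 0 := by
  unfold esym
  apply Finset.sum_eq_zero
  intro p hp
  apply Finset.sum_eq_zero
  intro q hq
  rw [if_neg]
  intro hh
  exact h ⟨p, hp, q, hq, hh⟩

/-- Left translation by an element of R fixes esym. -/
lemma esym_mul_left {p₀ : G n} (hp₀ : p₀ ∈ Rset row) (g : G n) :
    esym row col (p₀ * g) = esym row col g := by
  unfold esym
  refine (Finset.sum_nbij' (fun p => p₀ * p) (fun p => p₀⁻¹ * p) ?_ ?_ ?_ ?_ ?_).symm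
  · intro p hp; exact mul_mem_Rset row hp₀ hp
  · intro p hp; exact mul_mem_Rset row (inv_mem_Rset row hp₀) hp
  · intro p _; simp [mul_assoc]
  · intro p _; simp [mul_assoc]
  · intro p _
    apply Finset.sum_congr rfl
    intro q _
    congr 1
    simp only [eq_iff_iff]
    constructor
    · intro h; rw [mul_assoc, h]
    · intro h
      have := congrArg (fun x => p₀⁻¹ * x) h
      simpa [mul_assoc] using this

/-- Right translation by an element of C multiplies esym by the sign. -/
lemma esym_mul_right {q₀ : G n} (hq₀ : q₀ ∈ Cset col) (g : G n) :
    esym row col (g * q₀) = sgn q₀ * esym row col g := by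
  unfold esym
  rw [Finset.mul_sum]
  apply Finset.sum_congr rfl
  intro p _
  rw [Finset.mul_sum]
  refine Finset.sum_nbij' (fun q => q * q₀⁻¹) (fun q => q * q₀) ?_ ?_ ?_ ?_ ?_
  · intro q hq; exact mul_mem_Cset col hq (inv_mem_Cset col hq₀)
  · intro q hq; exact mul_mem_Cset col hq hq₀
  · intro q _; simp [mul_assoc]
  · intro q _; simp [mul_assoc]
  · intro q _
    rw [mul_ite, mul_zero]
    congr 1
    · simp only [eq_iff_iff]
      constructor
      · intro h
        have := congrArg (fun x => x * q₀⁻¹) h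
        simpa [mul_assoc] using this
      · intro h
        have := congrArg (fun x => x * q₀) h
        simpa [mul_assoc] using this
    · rw [sgn_mul, sgn_inv, mul_comm (sgn q), ← mul_assoc, sgn_mul_self, one_mul]


lemma sgn_swap {x y : Fin n} (h : x ≠ y) : sgn (Equiv.swap x y) = -1 := by
  simp [sgn, Equiv.Perm.sign_swap h]

lemma swap_mem_Rset {x y : Fin n} (h : row x = row y) :
    Equiv.swap x y ∈ Rset row := by
  rw [mem_Rset]
  intro z
  rcases eq_or_ne z x with rfl | hx
  · rw [Equiv.swap_apply_left, h]
  rcases eq_or_ne z y with rfl | hy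
  · rw [Equiv.swap_apply_right, h]
  · rw [Equiv.swap_apply_of_ne_of_ne hx hy]

lemma swap_mem_Cset {x y : Fin n} (h : col x = col y) :
    Equiv.swap x y ∈ Cset col := by
  rw [mem_Cset]
  intro z
  rcases eq_or_ne z x with rfl | hx
  · rw [Equiv.swap_apply_left, h]
  rcases eq_or_ne z y with rfl | hy
  · rw [Equiv.swap_apply_right, h]
  · rw [Equiv.swap_apply_of_ne_of_ne hx hy]

lemma isSwap_conj {σ τ : G n} (h : τ.IsSwap) : (σ * τ * σ⁻¹).IsSwap := by
  obtain ⟨a, b, hab, rfl⟩ := h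
  exact ⟨σ a, σ b, fun hh => hab (σ.injective hh), (Equiv.swap_apply_apply σ a b).symm⟩

lemma Zop_mul_left {p₀ : G n} (hp₀ : p₀ ∈ Rset row) (f : G n) :
    Zop (esym row col) (p₀ * f) = Zop (esym row col) f := by
  unfold Zop
  refine Finset.sum_nbij' (fun τ => p₀⁻¹ * τ * p₀) (fun τ => p₀ * τ * p₀⁻¹) ?_ ?_ ?_ ?_ ?_
  · intro τ hτ
    rw [mem_swaps] at *
    have := isSwap_conj (σ := p₀⁻¹) hτ
    simpa using this
  · intro τ hτ
    rw [mem_swaps] at *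
    exact isSwap_conj hτ
  · intro τ _; group
  · intro τ _; group
  · intro τ _
    have hh : τ * (p₀ * f) = p₀ * (p₀⁻¹ * τ * p₀ * f) := by group
    rw [hh, esym_mul_left row col hp₀]

lemma Zop_mul_right {q₀ : G n} (hq₀ : q₀ ∈ Cset col) (f : G n) :
    Zop (esym row col) (f * q₀) = sgn q₀ * Zop (esym row col) f := by
  unfold Zop
  rw [Finset.mul_sum]
  apply Finset.sum_congr rfl
  intro τ _
  rw [← mul_assoc, esym_mul_right row col hq₀]

lemma downclosed_eq_range (S : Finset ℕ) (h : ∀ a ∈ S, ∀ b ≤ a, b ∈ S) :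
    S = Finset.range S.card := by
  apply Finset.eq_of_subset_of_card_le
  · intro a ha
    rw [Finset.mem_range]
    have hsub : Finset.range (a + 1) ⊆ S := by
      intro b hb
      rw [Finset.mem_range] at hb
      exact h a ha b (Nat.lt_succ_iff.mp hb)
    have := Finset.card_le_card hsub
    rw [Finset.card_range] at this
    omega
  · rw [Finset.card_range]

lemma occ_iff
    (H1 : ∀ x y, row x = row y → col x = col y → x = y)
    (H2 : ∀ (x : Fin n) (i j : ℕ), i ≤ row x → j ≤ col x → ∃ y, row y = i ∧ col y = j)
    (i j : ℕ) :
    (∃ x, row x = i ∧ col x = j) ↔ j < (univ.filter (fun x => row x = i)).card := by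
  set S := univ.filter (fun x : Fin n => row x = i) with hS
  have hinj : Set.InjOn col S := by
    intro x hx y hy hc
    rw [hS, Finset.coe_filter] at hx hy
    simp only [Set.mem_setOf_eq, Finset.mem_univ, true_and] at hx hy
    exact H1 x y (hx.trans hy.symm) hc
  have hcardimg : (S.image col).card = S.card := Finset.card_image_of_injOn hinj
  have hdown : ∀ a ∈ S.image col, ∀ b ≤ a, b ∈ S.image col := by
    intro a ha b hb
    rw [Finset.mem_image] at ha ⊢
    obtain ⟨x, hx, rfl⟩ := ha
    rw [hS, Finset.mem_filter] at hx
    obtain ⟨y, hy1, hy2⟩ := H2 x (row x) b le_rfl hb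
    refine ⟨y, ?_, hy2⟩
    rw [hS, Finset.mem_filter]
    exact ⟨Finset.mem_univ _, hy1.trans hx.2⟩
  have himg : S.image col = Finset.range S.card := by
    rw [← hcardimg]
    exact downclosed_eq_range _ hdown
  constructor
  · rintro ⟨x, hx1, rfl⟩
    have : col x ∈ S.image col := by
      rw [Finset.mem_image]
      exact ⟨x, by rw [hS, Finset.mem_filter]; exact ⟨Finset.mem_univ _, hx1⟩, rfl⟩
    rw [himg, Finset.mem_range] at this
    exact this
  · intro hj
    have : j ∈ S.image col := by
      rw [himg, Finset.mem_range]
      exact hj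
    rw [Finset.mem_image] at this
    obtain ⟨x, hx, hcx⟩ := this
    rw [hS, Finset.mem_filter] at hx
    exact ⟨x, hx.2, hcx⟩


/-- The key combinatorial lemma: if `g` admits no RC factorization, then there are two
points in the same row of `t` whose `g⁻¹`-images are in the same column. -/
lemma key_exists
    (H1 : ∀ x y, row x = row y → col x = col y → x = y)
    (H2 : ∀ (x : Fin n) (i j : ℕ), i ≤ row x → j ≤ col x → ∃ y, row y = i ∧ col y = j)
    (g : G n) (h : ¬ ∃ p ∈ Rset row, ∃ q ∈ Cset col, p * q = g) :
    ∃ x y : Fin n, x ≠ y ∧ row x = row y ∧ col (g⁻¹ x) = col (g⁻¹ y) := by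
  by_contra hno
  push_neg at hno
  -- hno : ∀ x y, x ≠ y → row x = row y → col (g⁻¹ x) ≠ col (g⁻¹ y)
  apply h
  clear h
  set c2 : Fin n → ℕ := fun x => col (g⁻¹ x) with hc2
  have H1' : ∀ x y, col x = col y → row x = row y → x = y := fun x y hc hr => H1 x y hr hc
  have H2' : ∀ (x : Fin n) (i j : ℕ), i ≤ col x → j ≤ row x → ∃ y, col y = i ∧ row y = j := by
    intro x i j hi hj
    obtain ⟨y, hy1, hy2⟩ := H2 x j i hj hi
    exact ⟨y, hy2, hy1⟩
  set rowlen : ℕ → ℕ := fun i => (univ.filter (fun x : Fin n => row x = i)).card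
  set collen : ℕ → ℕ := fun j => (univ.filter (fun x : Fin n => col x = j)).card
  have occR : ∀ i j : ℕ, (∃ x, row x = i ∧ col x = j) ↔ j < rowlen i :=
    fun i j => occ_iff row col H1 H2 i j
  have occC : ∀ i j : ℕ, (∃ x, row x = i ∧ col x = j) ↔ i < collen j := by
    intro i j
    rw [show (∃ x, row x = i ∧ col x = j) ↔ (∃ x, col x = j ∧ row x = i) by
      constructor <;> rintro ⟨x, h1, h2⟩ <;> exact ⟨x, h2, h1⟩]
    exact occ_iff col row H1' H2' j i
  have collen_c2 : ∀ j : ℕ, (univ.filter (fun x : Fin n => c2 x = j)).card = collen j := by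
    intro j
    apply Finset.card_nbij (fun x => g⁻¹ x)
    · intro x hx
      rw [Finset.mem_coe, Finset.mem_filter] at hx ⊢
      exact ⟨Finset.mem_univ _, hx.2⟩
    · intro x _ y _ hxy
      exact g⁻¹.injective hxy
    · intro y hy
      rw [Finset.mem_coe, Finset.mem_filter] at hy
      refine ⟨g y, ?_, by simp⟩
      rw [Finset.mem_coe, Finset.mem_filter]
      refine ⟨Finset.mem_univ _, ?_⟩
      show col (g⁻¹ (g y)) = j
      rw [show g⁻¹ (g y) = y from g.symm_apply_apply y]
      exact hy.2
  -- Main induction: A(i) and B(i)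
  have AB : ∀ i : ℕ, (∀ x, row x = i → i < collen (c2 x)) ∧
      (∀ j, i < collen j → ∃ x, row x = i ∧ c2 x = j) := by
    intro i
    induction i using Nat.strong_induction_on with
    | _ i IH =>
      have hA : ∀ x, row x = i → i < collen (c2 x) := by
        intro x hx
        by_contra hle
        push_neg at hle
        set j := c2 x with hj
        set F := univ.filter (fun z : Fin n => c2 z = j) with hF
        have hFcard : F.card = collen j := collen_c2 j
        have hxF : x ∈ F := by
          rw [hF, Finset.mem_filter]
          exact ⟨Finset.mem_univ _, rfl⟩
        have hy : ∀ i' : ℕ, i' < collen j → ∃ y, row y = i' ∧ c2 y = j := by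
          intro i' hi'
          exact (IH i' (lt_of_lt_of_le hi' hle)).2 j hi'
        choose Y hY1 hY2 using hy
        classical
        set ψ : ℕ → Fin n := fun i' => if hi' : i' < collen j then Y i' hi' else x with hψ
        have hmaps : ∀ i' ∈ Finset.range (collen j), ψ i' ∈ F.erase x := by
          intro i' hi'
          rw [Finset.mem_range] at hi'
          rw [Finset.mem_erase]
          constructor
          · rw [hψ]
            simp only [dif_pos hi']
            intro hh
            have := hY1 i' hi'
            rw [hh, hx] at this
            omega
          · rw [hF, Finset.mem_filter, hψ]
            simp only [dif_pos hi']
            exact ⟨Finset.mem_univ _, hY2 i' hi'⟩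
        have hinj : Set.InjOn ψ (Finset.range (collen j)) := by
          intro a ha b hb hab
          rw [Finset.mem_coe, Finset.mem_range] at ha hb
          rw [hψ] at hab
          simp only [dif_pos ha, dif_pos hb] at hab
          have h1 := hY1 a ha
          have h2 := hY1 b hb
          rw [← hab] at h2
          omega
        have hcard := Finset.card_le_card_of_injOn ψ hmaps hinj
        rw [Finset.card_range, Finset.card_erase_of_mem hxF, hFcard] at hcard
        have hpos : 0 < F.card := Finset.card_pos.mpr ⟨x, hxF⟩
        rw [hFcard] at hpos
        omega
      refine ⟨hA, ?_⟩
      intro j0 hj0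
      set S := univ.filter (fun x : Fin n => row x = i) with hS
      have hinj : Set.InjOn c2 S := by
        intro x hx y hy hc
        rw [hS, Finset.coe_filter] at hx hy
        simp only [Set.mem_setOf_eq, Finset.mem_univ, true_and] at hx hy
        by_contra hne
        exact hno x y hne (hx.trans hy.symm) hc
      have hsub : S.image c2 ⊆ Finset.range (rowlen i) := by
        intro j hjmem
        rw [Finset.mem_image] at hjmem
        obtain ⟨x, hx, rfl⟩ := hjmem
        rw [hS, Finset.mem_filter] at hx
        have h1 : i < collen (c2 x) := hA x hx.2
        have h2 : ∃ y, row y = i ∧ col y = c2 x := (occC i (c2 x)).mpr h1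
        rw [Finset.mem_range]
        exact (occR i (c2 x)).mp h2
      have himg : S.image c2 = Finset.range (rowlen i) := by
        apply Finset.eq_of_subset_of_card_le hsub
        rw [Finset.card_range, Finset.card_image_of_injOn hinj]
      have hj0' : j0 < rowlen i := by
        have h2 : ∃ y, row y = i ∧ col y = j0 := (occC i j0).mpr hj0
        exact (occR i j0).mp h2
      have : j0 ∈ S.image c2 := by
        rw [himg, Finset.mem_range]
        exact hj0'
      rw [Finset.mem_image] at this
      obtain ⟨x, hx, hcx⟩ := this
      rw [hS, Finset.mem_filter] at hx
      exact ⟨x, hx.2, hcx⟩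
  -- construct the factorization
  have hocc : ∀ x : Fin n, ∃ y, row y = row x ∧ col y = c2 x := by
    intro x
    have := (AB (row x)).1 x rfl
    exact (occC (row x) (c2 x)).mpr this
  choose φ hφr hφc using hocc
  have hφinj : Function.Injective φ := by
    intro x y hxy
    by_contra hne
    refine absurd ?_ (hno x y hne ?_)
    · show c2 x = c2 y
      rw [← hφc x, ← hφc y, hxy]
    · rw [← hφr x, ← hφr y, hxy]
  have hφbij : Function.Bijective φ := Finite.injective_iff_bijective.mp hφinj
  set pperm : G n := Equiv.ofBijective φ hφbij with hpperm
  refine ⟨pperm⁻¹, ?_, pperm * g, ?_, by group⟩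
  · rw [mem_Rset]
    intro z
    set w := pperm⁻¹ z with hw
    have hwz : pperm w = z := by rw [hw]; simp
    have h2 : row (φ w) = row w := hφr w
    rw [show φ w = pperm w from rfl, hwz] at h2
    exact h2.symm
  · rw [mem_Cset]
    intro z
    show col (pperm (g z)) = col z
    have : col (φ (g z)) = c2 (g z) := hφc (g z)
    rw [show φ (g z) = pperm (g z) from rfl] at this
    rw [this, hc2]
    simp

theorem Zop_esym_eq
    (H1 : ∀ x y, row x = row y → col x = col y → x = y)
    (H2 : ∀ (x : Fin n) (i j : ℕ), i ≤ row x → j ≤ col x → ∃ y, row y = i ∧ col y = j)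
    (f : G n) :
    Zop (esym row col) f = Zop (esym row col) 1 * esym row col f := by
  by_cases hfac : ∃ p ∈ Rset row, ∃ q ∈ Cset col, p * q = f
  · obtain ⟨p, hp, q, hq, rfl⟩ := hfac
    rw [Zop_mul_left row col hp, esym_eval_fac row col H1 hp hq]
    have h1 : (q : G n) = 1 * q := by rw [one_mul]
    rw [h1, Zop_mul_right row col hq, mul_comm]
    simp
  · obtain ⟨x, y, hxy, hr, hc⟩ := key_exists row col H1 H2 f hfac
    have hu : Equiv.swap x y ∈ Rset row := swap_mem_Rset row hr
    have hv : Equiv.swap (f⁻¹ x) (f⁻¹ y) ∈ Cset col := swap_mem_Cset col hc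
    have hxy' : f⁻¹ x ≠ f⁻¹ y := fun hh => hxy (f⁻¹.injective hh)
    have hconj : Equiv.swap x y * f = f * Equiv.swap (f⁻¹ x) (f⁻¹ y) := by
      rw [Equiv.swap_apply_apply f⁻¹ x y]
      group
    have h0 : Zop (esym row col) f = - Zop (esym row col) f := by
      conv_lhs => rw [← Zop_mul_left row col hu (f := f), hconj,
        Zop_mul_right row col hv, sgn_swap hxy']
      ring
    have : Zop (esym row col) f = 0 := by linarith
    rw [this, esym_eval_nonfac row col hfac, mul_zero]

lemma mixed_lemma
    (H1 : ∀ x y, row x = row y → col x = col y → x = y)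
    {x y : Fin n} (hxy : x ≠ y) {p q : G n}
    (hp : p ∈ Rset row) (hq : q ∈ Cset col) (h : p * q = Equiv.swap x y) :
    q = 1 ∨ p = 1 := by
  by_cases hq1 : q = 1
  · exact Or.inl hq1
  · right
    have hfix : ∀ z, z ≠ x → z ≠ y → q z = z := by
      intro z hzx hzy
      have h1 : p (q z) = z := by
        have := congrArg (fun σ : G n => σ z) h
        simpa [Perm.mul_apply, Equiv.swap_apply_of_ne_of_ne hzx hzy] using this
      have hrow : row (q z) = row z := by
        have := (mem_Rset row).mp hp (q z)
        rw [h1] at this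
        exact this.symm
      have hcol : col (q z) = col z := (mem_Cset col).mp hq z
      exact H1 _ _ hrow hcol
    have hqx : q x = y := by
      by_contra hne
      -- then q x = x, and q y must be y as well, making q = 1
      have hqxx : q x = x := by
        by_contra hne2
        have h1 : q (q x) = q x := hfix (q x) hne2 hne
        exact hne2 (q.injective h1)
      have hqyy : q y = y := by
        by_contra hne2
        have hqynx : q y ≠ x := by
          intro hh
          exact hxy (q.injective (hqxx.trans hh.symm))
        have h1 : q (q y) = q y := hfix (q y) hqynx hne2
        exact hne2 (q.injective h1)
      apply hq1
      ext z
      rcases eq_or_ne z x with rfl | hzx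
      · rw [hqxx]; rfl
      rcases eq_or_ne z y with rfl | hzy
      · rw [hqyy]; rfl
      · rw [hfix z hzx hzy]; rfl
    have hqy : q y = x := by
      by_contra hne
      have hqynx : q y ≠ y := by
        intro hh
        exact hxy (q.injective (hqx.trans hh.symm))
      have h1 : q (q y) = q y := hfix (q y) hne hqynx
      exact hqynx (q.injective h1)
    have hqswap : q = Equiv.swap x y := by
      ext z
      rcases eq_or_ne z x with rfl | hzx
      · rw [hqx, Equiv.swap_apply_left]
      rcases eq_or_ne z y with rfl | hzy
      · rw [hqy, Equiv.swap_apply_right]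
      · rw [hfix z hzx hzy, Equiv.swap_apply_of_ne_of_ne hzx hzy]
    rw [hqswap] at h
    calc p = p * (Equiv.swap x y * Equiv.swap x y) := by rw [Equiv.swap_mul_self, mul_one]
    _ = (p * Equiv.swap x y) * Equiv.swap x y := by group
    _ = Equiv.swap x y * Equiv.swap x y := by rw [h]
    _ = 1 := Equiv.swap_mul_self x y

lemma swap_ne_one {x y : Fin n} (hxy : x ≠ y) : Equiv.swap x y ≠ (1 : G n) := by
  intro h
  have := congrArg (fun σ : G n => σ x) h
  simp [Equiv.swap_apply_left] at this
  exact hxy this.symm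

lemma esym_swap_eval
    (H1 : ∀ x y, row x = row y → col x = col y → x = y)
    {τ : G n} (hτ : τ.IsSwap) :
    esym row col τ = (if τ ∈ Rset row then (1:ℝ) else 0) -
      (if τ ∈ Cset col then (1:ℝ) else 0) := by
  obtain ⟨x, y, hxy, rfl⟩ := hτ
  by_cases hR : Equiv.swap x y ∈ Rset row
  · have hC : Equiv.swap x y ∉ Cset col := by
      intro hC
      exact swap_ne_one hxy (rc_eq_one row col H1 hR hC)
    rw [if_pos hR, if_neg hC]
    have : esym row col (Equiv.swap x y * 1) = sgn 1 :=
      esym_eval_fac row col H1 hR (one_mem_Cset col)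
    simpa [sgn_one] using this
  · by_cases hC : Equiv.swap x y ∈ Cset col
    · rw [if_neg hR, if_pos hC]
      have : esym row col (1 * Equiv.swap x y) = sgn (Equiv.swap x y) :=
        esym_eval_fac row col H1 (one_mem_Rset row) hC
      simpa [sgn_swap hxy] using this
    · rw [if_neg hR, if_neg hC]
      rw [esym_eval_nonfac row col]
      · ring
      · rintro ⟨p, hp, q, hq, hpq⟩
        rcases mixed_lemma row col H1 hxy hp hq hpq with rfl | rfl
        · rw [mul_one] at hpq; exact hR (hpq ▸ hp)
        · rw [one_mul] at hpq; exact hC (hpq ▸ hq)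

lemma Zop_esym_one
    (H1 : ∀ x y, row x = row y → col x = col y → x = y) :
    Zop (esym row col) 1 =
      (((swaps n).filter (· ∈ Rset row)).card : ℝ) -
      (((swaps n).filter (· ∈ Cset col)).card : ℝ) := by
  unfold Zop
  have : ∀ τ ∈ swaps n, esym row col (τ * 1) =
      (if τ ∈ Rset row then (1:ℝ) else 0) - (if τ ∈ Cset col then (1:ℝ) else 0) := by
    intro τ hτ
    rw [mul_one]
    exact esym_swap_eval row col H1 (mem_swaps.mp hτ)
  rw [Finset.sum_congr rfl this, Finset.sum_sub_distrib]
  rw [Finset.sum_boole, Finset.sum_boole]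

lemma card_pairs_row
    (H1 : ∀ x y, row x = row y → col x = col y → x = y)
    (H2 : ∀ (x : Fin n) (i j : ℕ), i ≤ row x → j ≤ col x → ∃ y, row y = i ∧ col y = j) :
    ((univ ×ˢ univ : Finset (Fin n × Fin n)).filter
      (fun z => row z.1 = row z.2 ∧ col z.2 < col z.1)).card = ∑ x, col x := by
  rw [Finset.card_eq_sum_card_fiberwise
    (f := Prod.fst) (t := univ) (fun z _ => Finset.mem_univ _)]
  apply Finset.sum_congr rfl
  intro x _
  rw [← Finset.card_range (col x)]
  apply Finset.card_nbij (fun z => col z.2)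
  · intro z hz
    simp only [Finset.mem_coe, Finset.mem_filter, Finset.mem_product, Finset.mem_univ, true_and] at hz
    obtain ⟨⟨h1, h2⟩, h3⟩ := hz
    rw [h3] at h2
    exact Finset.mem_range.mpr h2
  · intro z hz z' hz' hcc
    simp only [Finset.coe_filter, Set.mem_setOf_eq, Finset.mem_filter, Finset.mem_product,
      Finset.mem_univ, true_and] at hz hz'
    obtain ⟨⟨h1, h2⟩, h3⟩ := hz
    obtain ⟨⟨h1', h2'⟩, h3'⟩ := hz'
    have hz2 : z.2 = z'.2 := by
      apply H1
      · rw [← h1, ← h1', h3, h3']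
      · exact hcc
    rw [Prod.ext_iff]
    exact ⟨h3.trans h3'.symm, hz2⟩
  · intro j hj
    rw [Finset.mem_coe, Finset.mem_range] at hj
    obtain ⟨y, hy1, hy2⟩ := H2 x (row x) j (le_refl _) (le_of_lt hj)
    refine ⟨(x, y), ?_, hy2⟩
    rw [Finset.mem_coe, Finset.mem_filter, Finset.mem_filter]
    refine ⟨⟨Finset.mem_product.mpr ⟨Finset.mem_univ _, Finset.mem_univ _⟩, ?_, ?_⟩, rfl⟩
    · rw [hy1]
    · rw [hy2]; exact hj

lemma card_swapsR
    (H1 : ∀ x y, row x = row y → col x = col y → x = y) :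
    ((swaps n).filter (· ∈ Rset row)).card =
    ((univ ×ˢ univ : Finset (Fin n × Fin n)).filter
      (fun z => row z.1 = row z.2 ∧ col z.2 < col z.1)).card := by
  symm
  apply Finset.card_nbij (fun z => Equiv.swap z.1 z.2)
  · intro z hz
    simp only [Finset.mem_coe, Finset.mem_filter, Finset.mem_product, Finset.mem_univ, true_and] at hz
    obtain ⟨h1, h2⟩ := hz
    have hne : z.1 ≠ z.2 := by
      intro hh
      rw [hh] at h2
      exact lt_irrefl _ h2
    rw [Finset.mem_coe, Finset.mem_filter, mem_swaps]
    exact ⟨⟨z.1, z.2, hne, rfl⟩, swap_mem_Rset row h1⟩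
  · intro z hz z' hz' heq
    simp only [Finset.coe_filter, Set.mem_setOf_eq, Finset.mem_filter, Finset.mem_product,
      Finset.mem_univ, true_and] at hz hz'
    obtain ⟨h1, h2⟩ := hz
    obtain ⟨h1', h2'⟩ := hz'
    simp only at heq
    have happ := congrArg (fun σ : G n => σ z'.1) heq
    simp only [Equiv.swap_apply_left] at happ
    -- happ : swap z.1 z.2 z'.1 = z'.2
    rcases eq_or_ne z'.1 z.1 with he1 | he1
    · rw [he1, Equiv.swap_apply_left] at happ
      exact Prod.ext he1.symm happ
    · rcases eq_or_ne z'.1 z.2 with he2 | he2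
      · rw [he2, Equiv.swap_apply_right] at happ
        -- z'.1 = z.2, z'.2 = z.1 : contradiction with col ordering
        exfalso
        rw [← happ, he2] at h2'
        exact lt_asymm h2 h2'
      · rw [Equiv.swap_apply_of_ne_of_ne he1 he2] at happ
        exfalso
        rw [← happ] at h2'
        exact lt_irrefl _ h2'
  · intro τ hτ
    rw [Finset.mem_coe, Finset.mem_filter, mem_swaps] at hτ
    obtain ⟨⟨u, v, huv, rfl⟩, hmem⟩ := hτ
    have hrow : row u = row v := by
      have := (mem_Rset row).mp hmem u
      rw [Equiv.swap_apply_left] at this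
      exact this.symm
    have hcol : col u ≠ col v := by
      intro hh
      exact huv (H1 u v hrow hh)
    rcases lt_or_gt_of_ne hcol with hlt | hgt
    · refine ⟨(v, u), ?_, Equiv.swap_comm v u⟩
      rw [Finset.mem_coe, Finset.mem_filter]
      exact ⟨Finset.mem_product.mpr ⟨Finset.mem_univ _, Finset.mem_univ _⟩, hrow.symm, hlt⟩
    · refine ⟨(u, v), ?_, rfl⟩
      rw [Finset.mem_coe, Finset.mem_filter]
      exact ⟨Finset.mem_product.mpr ⟨Finset.mem_univ _, Finset.mem_univ _⟩, hrow, hgt⟩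

theorem Zop_esym_one_eq
    (H1 : ∀ x y, row x = row y → col x = col y → x = y)
    (H2 : ∀ (x : Fin n) (i j : ℕ), i ≤ row x → j ≤ col x → ∃ y, row y = i ∧ col y = j) :
    Zop (esym row col) 1 = (∑ x, (col x : ℝ)) - (∑ x, (row x : ℝ)) := by
  rw [Zop_esym_one row col H1]
  have hR : ((swaps n).filter (· ∈ Rset row)).card = ∑ x, col x := by
    rw [card_swapsR row col H1, card_pairs_row row col H1 H2]
  have hC : ((swaps n).filter (· ∈ Cset col)).card = ∑ x, row x := by
    have H1' : ∀ x y, col x = col y → row x = row y → x = y := fun x y hc hr => H1 x y hr hc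
    have H2' : ∀ (x : Fin n) (i j : ℕ), i ≤ col x → j ≤ row x → ∃ y, col y = i ∧ row y = j := by
      intro x i j hi hj
      obtain ⟨y, hy1, hy2⟩ := H2 x j i hj hi
      exact ⟨y, hy2, hy1⟩
    have hcr : Cset col = Rset col := rfl
    rw [hcr, card_swapsR col row H1', card_pairs_row col row H1' H2']
  rw [hR, hC]
  push_cast
  rfl

lemma mulVec_eq_Zop (v : G n → ℝ) :
    (transpositionGraphAdjMatrix n).mulVec v = Zop v := by
  funext f
  show ∑ g, transpositionGraphAdjMatrix n f g * v g = ∑ τ ∈ swaps n, v (τ * f)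
  have hterm : ∀ g : G n, transpositionGraphAdjMatrix n f g * v g =
      if f ≠ g ∧ (f * g⁻¹).IsSwap then v g else 0 := by
    intro g
    unfold transpositionGraphAdjMatrix
    split_ifs with h
    · rw [one_mul]
    · rw [zero_mul]
  rw [Finset.sum_congr rfl (fun g _ => hterm g), ← Finset.sum_filter]
  refine Finset.sum_nbij' (fun g => g * f⁻¹) (fun τ => τ * f) ?_ ?_ ?_ ?_ ?_
  · intro g hg
    rw [Finset.mem_filter] at hg
    obtain ⟨-, -, hsw⟩ := hg
    rw [mem_swaps]
    obtain ⟨x, y, hxy, hxyeq⟩ := hsw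
    refine ⟨x, y, hxy, ?_⟩
    have : (f * g⁻¹)⁻¹ = Equiv.swap x y := by
      rw [hxyeq, Equiv.swap_inv]
    rw [← this]
    group
  · intro τ hτ
    rw [mem_swaps] at hτ
    rw [Finset.mem_filter]
    obtain ⟨x, y, hxy, rfl⟩ := hτ
    refine ⟨Finset.mem_univ _, ?_, ?_⟩
    · intro hh
      have : Equiv.swap x y = (1 : G n) := by
        have := congrArg (fun σ : G n => σ * f⁻¹) hh
        simpa [mul_assoc] using this.symm
      exact swap_ne_one hxy this
    · have : f * (Equiv.swap x y * f)⁻¹ = (Equiv.swap x y)⁻¹ := by group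
      rw [this, Equiv.swap_inv]
      exact ⟨x, y, hxy, rfl⟩
  · intro g _; group
  · intro τ _; group
  · intro g _
    congr 1
    group

theorem eig_of_tableau
    (H1 : ∀ x y, row x = row y → col x = col y → x = y)
    (H2 : ∀ (x : Fin n) (i j : ℕ), i ≤ row x → j ≤ col x → ∃ y, row y = i ∧ col y = j)
    (m : ℤ) (hm : (m : ℝ) = (∑ x, (col x : ℝ)) - ∑ x, (row x : ℝ)) :
    IsTranspositionGraphEigenvalue n m := by
  refine ⟨esym row col, ?_, ?_⟩
  · intro h0
    have h1 := congrFun h0 1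
    rw [esym_one row col H1] at h1
    simpa using h1
  · rw [mulVec_eq_Zop]
    funext f
    rw [Pi.smul_apply, smul_eq_mul, Zop_esym_eq row col H1 H2 f,
      Zop_esym_one_eq row col H1 H2, ← hm]

/-! ### The explicit diagram made of four nested hooks -/

def hookF (k q p : ℕ) : Finset (ℕ × ℕ) :=
  ((Finset.range (q+1)).image (fun d => (k, k + d))) ∪
    ((Finset.range p).image (fun e => (k+1+e, k)))

lemma mem_hookF {k q p : ℕ} {z : ℕ × ℕ} :
    z ∈ hookF k q p ↔ (z.1 = k ∧ k ≤ z.2 ∧ z.2 ≤ k + q) ∨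
      (z.2 = k ∧ k + 1 ≤ z.1 ∧ z.1 ≤ k + p) := by
  unfold hookF
  rw [Finset.mem_union, Finset.mem_image, Finset.mem_image]
  constructor
  · rintro (⟨d, hd, rfl⟩ | ⟨e, he, rfl⟩)
    · rw [Finset.mem_range] at hd
      left; exact ⟨rfl, by omega, by omega⟩
    · rw [Finset.mem_range] at he
      right; exact ⟨rfl, by omega, by omega⟩
  · rintro (⟨h1, h2, h3⟩ | ⟨h1, h2, h3⟩)
    · left
      refine ⟨z.2 - k, by rw [Finset.mem_range]; omega, ?_⟩
      have : k + (z.2 - k) = z.2 := by omega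
      rw [this, ← h1]
    · right
      refine ⟨z.1 - k - 1, by rw [Finset.mem_range]; omega, ?_⟩
      have : k + 1 + (z.1 - k - 1) = z.1 := by omega
      rw [this, ← h1]

lemma gaussZ (m : ℕ) : ∑ i ∈ Finset.range m, (i : ℤ) = (m.choose 2 : ℤ) := by
  rw [← Nat.cast_sum, Finset.sum_range_id, Nat.choose_two_right]

lemma gaussZ' (m : ℕ) : ∑ e ∈ Finset.range m, ((e : ℤ) + 1) = ((m+1).choose 2 : ℤ) := by
  rw [← gaussZ (m+1), Finset.sum_range_succ']
  push_cast
  ring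

lemma card_hookF (k q p : ℕ) : (hookF k q p).card = q + 1 + p := by
  unfold hookF
  rw [Finset.card_union_of_disjoint, Finset.card_image_of_injective,
    Finset.card_image_of_injective, Finset.card_range, Finset.card_range]
  · intro x y hxy
    have h2 : k + 1 + x = k + 1 + y := congrArg Prod.fst hxy
    omega
  · intro x y hxy
    have h2 : k + x = k + y := congrArg Prod.snd hxy
    omega
  · rw [Finset.disjoint_left]
    rintro z hz1 hz2
    rw [Finset.mem_image] at hz1 hz2
    obtain ⟨d, _, rfl⟩ := hz1
    obtain ⟨e, _, he⟩ := hz2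
    have h1 := congrArg Prod.fst he
    have h2 := congrArg Prod.snd he
    simp only at h1 h2
    omega

lemma sum_hookF (k q p : ℕ) :
    ∑ z ∈ hookF k q p, ((z.2 : ℤ) - z.1) = ((q+1).choose 2 : ℤ) - ((p+1).choose 2 : ℤ) := by
  unfold hookF
  rw [Finset.sum_union, Finset.sum_image, Finset.sum_image]
  · have h1 : ∑ d ∈ Finset.range (q+1), (((k + d : ℕ) : ℤ) - (k : ℕ)) =
        ((q+1).choose 2 : ℤ) := by
      have : ∀ d ∈ Finset.range (q+1), (((k + d : ℕ) : ℤ) - (k : ℕ)) = (d : ℤ) := by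
        intro d _; push_cast; ring
      rw [Finset.sum_congr rfl this, gaussZ]
    have h2 : ∑ e ∈ Finset.range p, (((k : ℕ) : ℤ) - ((k + 1 + e : ℕ) : ℤ)) =
        -((p+1).choose 2 : ℤ) := by
      have : ∀ e ∈ Finset.range p, (((k : ℕ) : ℤ) - ((k + 1 + e : ℕ) : ℤ)) = -(e + 1 : ℤ) := by
        intro e _; push_cast; ring
      rw [Finset.sum_congr rfl this, Finset.sum_neg_distrib, gaussZ']
    rw [h1, h2]
    ring
  · intro x _ y _ hxy
    have h2 : k + 1 + x = k + 1 + y := congrArg Prod.fst hxy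
    omega
  · intro x _ y _ hxy
    have h2 : k + x = k + y := congrArg Prod.snd hxy
    omega
  · rw [Finset.disjoint_left]
    rintro z hz1 hz2
    rw [Finset.mem_image] at hz1 hz2
    obtain ⟨d, _, rfl⟩ := hz1
    obtain ⟨e, _, he⟩ := hz2
    have h1 := congrArg Prod.fst he
    have h2 := congrArg Prod.snd he
    simp only at h1 h2
    omega

def diag4 (q1 p1 q2 p2 q3 p3 q4 p4 : ℕ) : Finset (ℕ × ℕ) :=
  hookF 0 q1 p1 ∪ hookF 1 q2 p2 ∪ hookF 2 q3 p3 ∪ hookF 3 q4 p4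

lemma min_of_mem_hookF {k q p : ℕ} {z : ℕ × ℕ} (h : z ∈ hookF k q p) :
    min z.1 z.2 = k := by
  rw [mem_hookF] at h
  omega

lemma disj_hookF {k k' q p q' p' : ℕ} (h : k ≠ k') :
    Disjoint (hookF k q p) (hookF k' q' p') := by
  rw [Finset.disjoint_left]
  intro z hz1 hz2
  exact h ((min_of_mem_hookF hz1).symm.trans (min_of_mem_hookF hz2))

lemma card_diag4 (q1 p1 q2 p2 q3 p3 q4 p4 : ℕ) :
    (diag4 q1 p1 q2 p2 q3 p3 q4 p4).card =
      (q1+1+p1) + (q2+1+p2) + (q3+1+p3) + (q4+1+p4) := by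
  unfold diag4
  rw [Finset.card_union_of_disjoint, Finset.card_union_of_disjoint,
    Finset.card_union_of_disjoint, card_hookF, card_hookF, card_hookF, card_hookF]
  · exact disj_hookF (by omega)
  · apply Finset.disjoint_union_left.mpr
    exact ⟨disj_hookF (by omega), disj_hookF (by omega)⟩
  · apply Finset.disjoint_union_left.mpr
    refine ⟨Finset.disjoint_union_left.mpr ⟨disj_hookF (by omega), disj_hookF (by omega)⟩,
      disj_hookF (by omega)⟩

lemma sum_diag4 (q1 p1 q2 p2 q3 p3 q4 p4 : ℕ) :
    ∑ z ∈ diag4 q1 p1 q2 p2 q3 p3 q4 p4, ((z.2 : ℤ) - z.1) =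
      (((q1+1).choose 2 : ℤ) - ((p1+1).choose 2 : ℤ)) +
      (((q2+1).choose 2 : ℤ) - ((p2+1).choose 2 : ℤ)) +
      (((q3+1).choose 2 : ℤ) - ((p3+1).choose 2 : ℤ)) +
      (((q4+1).choose 2 : ℤ) - ((p4+1).choose 2 : ℤ)) := by
  unfold diag4
  rw [Finset.sum_union, Finset.sum_union, Finset.sum_union,
    sum_hookF, sum_hookF, sum_hookF, sum_hookF]
  · exact disj_hookF (by omega)
  · apply Finset.disjoint_union_left.mpr
    exact ⟨disj_hookF (by omega), disj_hookF (by omega)⟩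
  · apply Finset.disjoint_union_left.mpr
    refine ⟨Finset.disjoint_union_left.mpr ⟨disj_hookF (by omega), disj_hookF (by omega)⟩,
      disj_hookF (by omega)⟩

set_option maxHeartbeats 1000000 in
lemma mem_diag4 {q1 p1 q2 p2 q3 p3 q4 p4 : ℕ} {z : ℕ × ℕ} :
    z ∈ diag4 q1 p1 q2 p2 q3 p3 q4 p4 ↔
      ((z.1 = 0 ∧ 0 ≤ z.2 ∧ z.2 ≤ 0 + q1) ∨ (z.2 = 0 ∧ 1 ≤ z.1 ∧ z.1 ≤ 0 + p1)) ∨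
      ((z.1 = 1 ∧ 1 ≤ z.2 ∧ z.2 ≤ 1 + q2) ∨ (z.2 = 1 ∧ 2 ≤ z.1 ∧ z.1 ≤ 1 + p2)) ∨
      ((z.1 = 2 ∧ 2 ≤ z.2 ∧ z.2 ≤ 2 + q3) ∨ (z.2 = 2 ∧ 3 ≤ z.1 ∧ z.1 ≤ 2 + p3)) ∨
      ((z.1 = 3 ∧ 3 ≤ z.2 ∧ z.2 ≤ 3 + q4) ∨ (z.2 = 3 ∧ 4 ≤ z.1 ∧ z.1 ≤ 3 + p4)) := by
  unfold diag4
  simp only [Finset.mem_union, mem_hookF]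
  omega

set_option maxHeartbeats 1000000 in
lemma downclosed_diag4 {q1 p1 q2 p2 q3 p3 q4 p4 : ℕ}
    (hq : q4 < q3 ∧ q3 < q2 ∧ q2 < q1) (hp : p4 < p3 ∧ p3 < p2 ∧ p2 < p1)
    {i j i' j' : ℕ} (h : (i, j) ∈ diag4 q1 p1 q2 p2 q3 p3 q4 p4)
    (hi : i' ≤ i) (hj : j' ≤ j) :
    (i', j') ∈ diag4 q1 p1 q2 p2 q3 p3 q4 p4 := by
  rw [mem_diag4] at h ⊢
  simp only at h ⊢
  omega

theorem eig_of_diag4 (n : ℕ) (q1 p1 q2 p2 q3 p3 q4 p4 : ℕ) (m : ℤ)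
    (hq : q4 < q3 ∧ q3 < q2 ∧ q2 < q1) (hp : p4 < p3 ∧ p3 < p2 ∧ p2 < p1)
    (hsize : (q1+1+p1) + (q2+1+p2) + (q3+1+p3) + (q4+1+p4) = n)
    (hm : m = (((q1+1).choose 2 : ℤ) - ((p1+1).choose 2 : ℤ)) +
      (((q2+1).choose 2 : ℤ) - ((p2+1).choose 2 : ℤ)) +
      (((q3+1).choose 2 : ℤ) - ((p3+1).choose 2 : ℤ)) +
      (((q4+1).choose 2 : ℤ) - ((p4+1).choose 2 : ℤ))) :
    IsTranspositionGraphEigenvalue n m := by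
  classical
  set D := diag4 q1 p1 q2 p2 q3 p3 q4 p4 with hD
  have hcard : Fintype.card {z // z ∈ D} = n := by
    rw [Fintype.card_coe, hD, card_diag4]
    exact hsize
  let eqv : {z // z ∈ D} ≃ Fin n := Fintype.equivFinOfCardEq hcard
  set row : Fin n → ℕ := fun x => (eqv.symm x).1.1 with hrow
  set col : Fin n → ℕ := fun x => (eqv.symm x).1.2 with hcol
  have H1 : ∀ x y, row x = row y → col x = col y → x = y := by
    intro x y hr hc
    have : eqv.symm x = eqv.symm y := Subtype.ext (Prod.ext hr hc)
    exact eqv.symm.injective this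
  have H2 : ∀ (x : Fin n) (i j : ℕ), i ≤ row x → j ≤ col x → ∃ y, row y = i ∧ col y = j := by
    intro x i j hi hj
    have hmem : ((eqv.symm x).1.1, (eqv.symm x).1.2) ∈ D := by
      rw [Prod.mk.eta]
      exact (eqv.symm x).2
    have hmem' : (i, j) ∈ D := downclosed_diag4 hq hp hmem hi hj
    refine ⟨eqv ⟨(i, j), hmem'⟩, ?_, ?_⟩
    · rw [hrow]
      simp
    · rw [hcol]
      simp
  apply TG.eig_of_tableau row col H1 H2
  have hsum : (∑ x, (col x : ℝ)) - (∑ x, (row x : ℝ)) =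
      ((∑ z ∈ D, ((z.2 : ℤ) - (z.1 : ℤ)) : ℤ) : ℝ) := by
    rw [← Finset.sum_sub_distrib]
    have h1 : ∀ x : Fin n, (col x : ℝ) - (row x : ℝ) =
        (fun d : {z // z ∈ D} => ((d.1.2 : ℝ) - (d.1.1 : ℝ))) (eqv.symm x) := by
      intro x; rfl
    rw [Finset.sum_congr rfl (fun x _ => h1 x)]
    rw [Equiv.sum_comp eqv.symm (fun d : {z // z ∈ D} => ((d.1.2 : ℝ) - (d.1.1 : ℝ)))]
    rw [Finset.sum_coe_sort D (fun z => ((z.2 : ℝ) - (z.1 : ℝ)))]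
    push_cast
    try rfl
  rw [hsum, hD, sum_diag4, hm]

end TG

theorem stmt9 (n a : ℕ) (hn : 45 ≤ n) (ha1 : (n + 7) ⌈/⌉ 5 ≤ a)
    (ha2 : a ≤ (n - 11) / 3) (hpar : (n - a) % 2 = 1)
    (b : ℕ) (hb : b = (n - 3 * a - 1) / 2)
    (c : ℕ) (hc1 : b + 2 ≤ c) (hc2 : c ≤ a - 2) :
    IsTranspositionGraphEigenvalue n (((a.choose 2 : ℕ) : ℤ) - c) := by
  rw [Nat.ceilDiv_eq_add_pred_div] at ha1
  have key : n = 3 * a + 2 * b + 1 ∧ b + 4 ≤ a ∧ 5 ≤ b ∧ b + 2 ≤ c ∧ c + 2 ≤ a := by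
    omega
  obtain ⟨hkey1, hkey2, hkey3, hkey4, hkey5⟩ := key
  have hstep : ∀ m : ℕ, (m+1).choose 2 = m + m.choose 2 := by
    intro m
    rw [Nat.choose_succ_succ, Nat.choose_one_right]
  have hc7 : 7 ≤ c := by omega
  by_cases h2c : 2 * c ≤ a + b + 2
  · -- Family I
    apply TG.eig_of_diag4 n (a-1) (a+b-c) (a+b-c) (c-3) (c-4) 3 2 0
    · omega
    · omega
    · omega
    · -- the content identity
      have e1 : a - 1 + 1 = a := by omega
      have e2 : (c - 3) + 1 = ((c-4)+1) + 1 := by omega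
      have e3 : (c - 4) + 1 = (c-4) + 1 := rfl
      rw [e1, e2, hstep ((c-4)+1)]
      have n1 : (3+1).choose 2 = 6 := by decide
      have n2 : (2+1).choose 2 = 3 := by decide
      have n3 : (0+1).choose 2 = 0 := by decide
      rw [n1, n2, n3]
      generalize a.choose 2 = A
      generalize ((a+b-c)+1).choose 2 = X
      generalize ((c-4)+1).choose 2 = W
      push_cast
      omega
  · -- Family II
    apply TG.eig_of_diag4 n (a-1) (c-1) (c-2) (a+b-c) (a+b-c) 1 0 0
    · omega
    · omega
    · omega
    · have e1 : a - 1 + 1 = a := by omega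
      have e2 : (c - 1) + 1 = ((c-2)+1) + 1 := by omega
      rw [e1, e2, hstep ((c-2)+1)]
      have n1 : (1+1).choose 2 = 1 := by decide
      have n2 : (0+1).choose 2 = 0 := by decide
      rw [n1, n2]
      generalize a.choose 2 = A
      generalize ((c-2)+1).choose 2 = Y
      generalize ((a+b-c)+1).choose 2 = X
      push_cast
      omega
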